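/- Let K be a compact Hausdorff space and f ∈ C(K) with ‖f‖∞ = 1 such that |f(x)| < 1 for every limit point x of K. Then f is not a Δ-point. In fact, the set H = {x ∈ K : |f(x)| = 1} is a finite nonempty set of isolated points, and the norm-one rank-one projection P = μ ⊗ f, where μ = (1/|H|) Σ_{h∈H} sign(f(h))·δ_h, satisfies ‖Id − P‖ ≤ 2 − min{δ, 2/|H|} < 2 where δ = 1 − max_{x ∈ K∖H} |f(x)| > 0. -/

import Mathlib

open Set Filter

lemma aux_abs_sign_le_one (r : ℝ) : |Real.sign r| ≤ 1 := by
  rcases Real.sign_apply_eq r with h | h | h <;> rw [h] <;> norm_num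

lemma aux_exists_norm_eq {K : Type*} [TopologicalSpace K] [CompactSpace K] [Nonempty K]
    (h : C(K, ℝ)) : ∃ x : K, ‖h‖ = |h x| := by
  obtain ⟨x, -, hx⟩ := isCompact_univ.exists_isMaxOn univ_nonempty
    ((map_continuous h).abs.continuousOn (s := univ))
  refine ⟨x, le_antisymm ?_ ?_⟩
  · exact (ContinuousMap.norm_le _ (abs_nonneg _)).2 fun y => by
      simpa [Real.norm_eq_abs] using hx (mem_univ y)
  · simpa [Real.norm_eq_abs] using h.norm_coe_le_norm x

lemma aux_abs_sum_le {K : Type*} [TopologicalSpace K] [CompactSpace K]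
    (f g : C(K, ℝ)) (T : Finset K) :
    |∑ h ∈ T, Real.sign (f h) * g h| ≤ (T.card : ℝ) * ‖g‖ := by
  calc |∑ h ∈ T, Real.sign (f h) * g h| ≤ ∑ h ∈ T, |Real.sign (f h) * g h| :=
        Finset.abs_sum_le_sum_abs _ _
    _ ≤ ∑ _h ∈ T, ‖g‖ := Finset.sum_le_sum fun h _ => by
        rw [abs_mul]
        calc |Real.sign (f h)| * |g h| ≤ 1 * ‖g‖ :=
              mul_le_mul (aux_abs_sign_le_one _)
                (by simpa [Real.norm_eq_abs] using g.norm_coe_le_norm h)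
                (abs_nonneg _) one_pos.le
          _ = ‖g‖ := one_mul _
    _ = (T.card : ℝ) * ‖g‖ := by rw [Finset.sum_const, nsmul_eq_mul]

set_option maxHeartbeats 2000000 in
theorem stmt_10 {K : Type*} [TopologicalSpace K] [CompactSpace K] [T2Space K] [Nonempty K]
    (f : C(K, ℝ)) (hf : ‖f‖ = 1)
    (hlim : ∀ x : K, (nhdsWithin x {x}ᶜ).NeBot → |f x| < 1) :
    Set.Finite {x : K | |f x| = 1} ∧
    Set.Nonempty {x : K | |f x| = 1} ∧
    (∀ x ∈ {x : K | |f x| = 1}, IsOpen ({x} : Set K)) ∧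
    (∀ hfin : Set.Finite {x : K | |f x| = 1},
      ∀ P : C(K, ℝ) →L[ℝ] C(K, ℝ),
        (∀ g : C(K, ℝ), P g =
          ((hfin.toFinset.card : ℝ)⁻¹ *
            ∑ h ∈ hfin.toFinset, Real.sign (f h) * g h) • f) →
        ‖ContinuousLinearMap.id ℝ (C(K, ℝ)) - P‖ ≤
          2 - min (1 - sSup ((fun x => |f x|) '' {x : K | |f x| = 1}ᶜ))
                (2 / (hfin.toFinset.card : ℝ)) ∧
        ‖ContinuousLinearMap.id ℝ (C(K, ℝ)) - P‖ < 2) ∧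
    ¬ (∀ ε > (0 : ℝ),
        f ∈ closure (convexHull ℝ {g : C(K, ℝ) | ‖g‖ ≤ 1 ∧ 2 - ε ≤ ‖f - g‖})) := by
  classical
  set H : Set K := {x : K | |f x| = 1} with hH
  -- isolated points
  have key3 : ∀ x ∈ H, IsOpen ({x} : Set K) := by
    intro x hx
    rw [isOpen_singleton_iff_punctured_nhds]
    by_contra hb
    exact absurd (show |f x| = 1 from hx) (ne_of_lt (hlim x (neBot_iff.mpr hb)))
  have hHopen : IsOpen H := by
    rw [isOpen_iff_forall_mem_open]
    intro x hx
    exact ⟨{x}, singleton_subset_iff.mpr hx, key3 x hx, rfl⟩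
  have hHclosed : IsClosed H := isClosed_eq (map_continuous f).abs continuous_const
  have hfin : H.Finite := by
    have hd : DiscreteTopology H := by
      rw [discreteTopology_iff_isOpen_singleton]
      intro a
      have h1 : ((Subtype.val : H → K) ⁻¹' ({(a : K)} : Set K)) = {a} := by
        ext y; simp [Subtype.ext_iff]
      rw [← h1]
      exact (key3 (a : K) a.2).preimage continuous_subtype_val
    exact hHclosed.isCompact.finite (isDiscrete_iff_discreteTopology.mpr hd)
  have hfx1 : ∀ x, |f x| ≤ 1 := fun x => by
    simpa [Real.norm_eq_abs, hf] using f.norm_coe_le_norm x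
  have hne : H.Nonempty := by
    obtain ⟨x, hx⟩ := aux_exists_norm_eq f
    exact ⟨x, show |f x| = 1 from hx.symm.trans hf⟩
  set S : ℝ := sSup ((fun x => |f x|) '' Hᶜ) with hSdef
  have hbdd : BddAbove ((fun x => |f x|) '' Hᶜ) := by
    refine ⟨1, ?_⟩; rintro y ⟨z, -, rfl⟩; exact hfx1 z
  have hS_lt : S < 1 := by
    rcases eq_empty_or_nonempty Hᶜ with hc | hc
    · simp [hSdef, hc, Real.sSup_empty]
    · obtain ⟨x, hxc, hx⟩ := (hHopen.isClosed_compl.isCompact).exists_isMaxOn hc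
        ((map_continuous f).abs.continuousOn)
      have hx1 : |f x| < 1 := lt_of_le_of_ne (hfx1 x) (fun h => hxc h)
      refine lt_of_le_of_lt (csSup_le (hc.image _) ?_) hx1
      rintro y ⟨z, hz, rfl⟩; exact hx hz
  have hle_S : ∀ x, x ∉ H → |f x| ≤ S := fun x hx => le_csSup hbdd ⟨x, hx, rfl⟩
  have hfsign : ∀ x, x ∈ H → Real.sign (f x) = f x := by
    intro x hx
    rcases (abs_eq (by norm_num : (0:ℝ) ≤ 1)).mp (show |f x| = 1 from hx) with h | h
    · rw [h, Real.sign_one]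
    · rw [h]; rw [show (-1 : ℝ) = -(1:ℝ) from rfl, Real.sign_neg, Real.sign_one]
  have hfsq : ∀ x, x ∈ H → f x * f x = 1 := by
    intro x hx
    rcases (abs_eq (by norm_num : (0:ℝ) ≤ 1)).mp (show |f x| = 1 from hx) with h | h <;>
      rw [h] <;> norm_num
  refine ⟨hfin, hne, key3, ?_, ?_⟩
  · -- part 4
    intro hfin' P hP
    set T := hfin'.toFinset with hT
    have hmem : ∀ h, h ∈ T ↔ h ∈ H := fun h => hfin'.mem_toFinset
    have hncard : 0 < T.card := Finset.card_pos.mpr (hfin'.toFinset_nonempty.mpr hne)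
    have hn1 : (1:ℝ) ≤ (T.card : ℝ) := by exact_mod_cast hncard
    have hnpos : (0:ℝ) < (T.card : ℝ) := by linarith
    set m : ℝ := min (1 - S) (2 / (T.card : ℝ)) with hm
    have hm_pos : 0 < m := lt_min (by linarith) (by positivity)
    have hm_le : m ≤ 2 := le_trans (min_le_right _ _) (by
      rw [div_le_iff₀ hnpos]; nlinarith)
    have hbound : ‖ContinuousLinearMap.id ℝ (C(K, ℝ)) - P‖ ≤ 2 - m := by
      refine ContinuousLinearMap.opNorm_le_bound _ (by linarith) fun g => ?_
      rw [ContinuousLinearMap.sub_apply, ContinuousLinearMap.id_apply, hP g]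
      rw [ContinuousMap.norm_le _ (mul_nonneg (by linarith) (norm_nonneg g))]
      intro x
      simp only [ContinuousMap.sub_apply, ContinuousMap.smul_apply, smul_eq_mul,
        Real.norm_eq_abs]
      set c : ℝ := (T.card : ℝ)⁻¹ * ∑ h ∈ T, Real.sign (f h) * g h with hc
      have hgx : ∀ y, |g y| ≤ ‖g‖ := fun y => by
        simpa [Real.norm_eq_abs] using g.norm_coe_le_norm y
      have hcb : |c| ≤ ‖g‖ := by
        rw [hc, abs_mul, abs_inv, abs_of_nonneg (by positivity : (0:ℝ) ≤ (T.card:ℝ))]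
        calc (T.card : ℝ)⁻¹ * |∑ h ∈ T, Real.sign (f h) * g h|
            ≤ (T.card : ℝ)⁻¹ * ((T.card : ℝ) * ‖g‖) :=
              mul_le_mul_of_nonneg_left (aux_abs_sum_le f g T) (by positivity)
          _ = ‖g‖ := by field_simp
      by_cases hxH : x ∈ H
      · -- x ∈ H
        have hx' : x ∈ T := (hmem x).mpr hxH
        have hsplit : ∑ h ∈ T, Real.sign (f h) * g h
            = Real.sign (f x) * g x + ∑ h ∈ T.erase x, Real.sign (f h) * g h :=
          (Finset.add_sum_erase T _ hx').symm
        set R : ℝ := ∑ h ∈ T.erase x, Real.sign (f h) * g h with hR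
        have hkey : g x - c * f x
            = (1 - (T.card : ℝ)⁻¹) * g x - (T.card : ℝ)⁻¹ * f x * R := by
          rw [hc, hsplit, hfsign x hxH]
          linear_combination (-(T.card : ℝ)⁻¹ * g x) * hfsq x hxH
        have hRb : |R| ≤ ((T.card : ℝ) - 1) * ‖g‖ := by
          have h1 : ((T.erase x).card : ℝ) = (T.card : ℝ) - 1 := by
            rw [Finset.card_erase_of_mem hx']
            push_cast [Nat.cast_sub hncard]
            ring
          calc |R| ≤ ((T.erase x).card : ℝ) * ‖g‖ := aux_abs_sum_le f g _
            _ = ((T.card : ℝ) - 1) * ‖g‖ := by rw [h1]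
        rw [hkey]
        have hinv : (T.card : ℝ)⁻¹ * (T.card : ℝ) = 1 := by field_simp
        have hm2 : m ≤ 2 * (T.card : ℝ)⁻¹ := by
          refine le_trans (min_le_right _ _) ?_
          rw [div_eq_mul_inv]
        have hfx1' : |f x| = 1 := hxH
        calc |(1 - (T.card : ℝ)⁻¹) * g x - (T.card : ℝ)⁻¹ * f x * R|
            ≤ |(1 - (T.card : ℝ)⁻¹) * g x| + |(T.card : ℝ)⁻¹ * f x * R| := abs_sub _ _
          _ ≤ (1 - (T.card : ℝ)⁻¹) * ‖g‖
              + (T.card : ℝ)⁻¹ * (((T.card : ℝ) - 1) * ‖g‖) := by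
              gcongr
              · rw [abs_mul, abs_of_nonneg (by
                  have : (T.card : ℝ)⁻¹ ≤ 1 := by
                    rw [inv_le_one_iff₀]; right; exact hn1
                  linarith)]
                exact mul_le_mul_of_nonneg_left (hgx x) (by
                  have : (T.card : ℝ)⁻¹ ≤ 1 := by
                    rw [inv_le_one_iff₀]; right; exact hn1
                  linarith)
              · rw [abs_mul, abs_mul, abs_inv,
                  abs_of_nonneg (le_of_lt hnpos), hfx1', mul_one]
                exact mul_le_mul_of_nonneg_left hRb (by positivity)
          _ ≤ (2 - m) * ‖g‖ := by
              nlinarith [mul_le_mul_of_nonneg_right hm2 (norm_nonneg g),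
                norm_nonneg g, hinv]
      · -- x ∉ H
        have h1 : |f x| ≤ S := hle_S x hxH
        calc |g x - c * f x| ≤ |g x| + |c * f x| := abs_sub _ _
          _ ≤ ‖g‖ + ‖g‖ * S := by
              refine add_le_add (hgx x) ?_
              rw [abs_mul]
              exact mul_le_mul hcb h1 (abs_nonneg _) (norm_nonneg g)
          _ ≤ (2 - m) * ‖g‖ := by
              have hmS : m ≤ 1 - S := min_le_left _ _
              nlinarith [norm_nonneg g]
    exact ⟨hbound, lt_of_le_of_lt hbound (by linarith)⟩
  · -- part 5 : not a Δ-point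
    intro hΔ
    set T := hfin.toFinset with hT
    have hmem : ∀ h, h ∈ T ↔ h ∈ H := fun h => hfin.mem_toFinset
    have hncard : 0 < T.card := Finset.card_pos.mpr (hfin.toFinset_nonempty.mpr hne)
    have hn1 : (1:ℝ) ≤ (T.card : ℝ) := by exact_mod_cast hncard
    have hnpos : (0:ℝ) < (T.card : ℝ) := by linarith
    have hS0 : 0 ≤ S := by
      rcases eq_empty_or_nonempty Hᶜ with hc | hc
      · -- then K = H, so S = sSup ∅ = 0
        rw [hSdef, hc, image_empty, Real.sSup_empty]
      · obtain ⟨x, hx⟩ := hc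
        exact le_trans (abs_nonneg (f x)) (le_csSup hbdd ⟨x, hx, rfl⟩)
    set ε : ℝ := (1 - S) / 2 with hε
    have hεpos : 0 < ε := by rw [hε]; linarith
    have hεlt : ε < 1 - S := by rw [hε]; linarith
    have hεle1 : ε ≤ 1 := by rw [hε]; linarith
    -- the functional
    set φ : C(K, ℝ) →L[ℝ] ℝ :=
      (T.card : ℝ)⁻¹ • ∑ h ∈ T, Real.sign (f h) • ContinuousMap.evalCLM ℝ h with hφdef
    have hφ : ∀ g : C(K, ℝ), φ g = (T.card : ℝ)⁻¹ * ∑ h ∈ T, Real.sign (f h) * g h := by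
      intro g
      simp only [hφdef, ContinuousLinearMap.smul_apply, ContinuousLinearMap.sum_apply,
        smul_eq_mul]
      rfl
    have hφf : φ f = 1 := by
      rw [hφ]
      have : ∑ h ∈ T, Real.sign (f h) * f h = (T.card : ℝ) := by
        rw [Finset.sum_congr rfl (fun h hh => by
          rw [hfsign h ((hmem h).mp hh), hfsq h ((hmem h).mp hh)])]
        rw [Finset.sum_const, nsmul_eq_mul, mul_one]
      rw [this]; field_simp
    set c : ℝ := 1 - (2 - ε) / (T.card : ℝ) with hcdef
    have hclt : c < 1 := by
      rw [hcdef]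
      have : 0 < (2 - ε) / (T.card : ℝ) := div_pos (by linarith) hnpos
      linarith
    -- the key inclusion
    have hincl : {g : C(K, ℝ) | ‖g‖ ≤ 1 ∧ 2 - ε ≤ ‖f - g‖} ⊆ {g : C(K, ℝ) | φ g ≤ c} := by
      rintro g ⟨hg1, hg2⟩
      have hgy : ∀ y, |g y| ≤ 1 := fun y =>
        le_trans (by simpa [Real.norm_eq_abs] using g.norm_coe_le_norm y) hg1
      obtain ⟨x, hx⟩ := aux_exists_norm_eq (f - g)
      have hfgx : 2 - ε ≤ |f x - g x| := by
        have := hx ▸ hg2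
        simpa [ContinuousMap.sub_apply] using this
      have hfxge : 1 - ε ≤ |f x| := by
        have h2 : |f x - g x| ≤ |f x| + |g x| := abs_sub _ _
        have := hgy x
        linarith
      have hxH : x ∈ H := by
        by_contra hxn
        have := hle_S x hxn
        linarith
      have hsx : Real.sign (f x) * g x ≤ ε - 1 := by
        rcases (abs_eq (by norm_num : (0:ℝ) ≤ 1)).mp (show |f x| = 1 from hxH) with h | h
        · rw [hfsign x hxH, h]
          rcases le_abs.mp hfgx with h2 | h2
          · rw [h] at h2; linarith
          · rw [h] at h2
            have := hgy x
            have := abs_le.mp (hgy x)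
            linarith
        · rw [hfsign x hxH, h]
          rcases le_abs.mp hfgx with h2 | h2
          · rw [h] at h2
            have := abs_le.mp (hgy x)
            linarith
          · rw [h] at h2; linarith
      have hx' : x ∈ T := (hmem x).mpr hxH
      have hsplit : ∑ h ∈ T, Real.sign (f h) * g h
          = Real.sign (f x) * g x + ∑ h ∈ T.erase x, Real.sign (f h) * g h :=
        (Finset.add_sum_erase T _ hx').symm
      have hRle : ∑ h ∈ T.erase x, Real.sign (f h) * g h ≤ (T.card : ℝ) - 1 := by
        have h1 : ((T.erase x).card : ℝ) = (T.card : ℝ) - 1 := by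
          rw [Finset.card_erase_of_mem hx']
          push_cast [Nat.cast_sub hncard]
          ring
        calc ∑ h ∈ T.erase x, Real.sign (f h) * g h
            ≤ ∑ _h ∈ T.erase x, (1:ℝ) := Finset.sum_le_sum fun h _ => by
              calc Real.sign (f h) * g h ≤ |Real.sign (f h) * g h| := le_abs_self _
                _ ≤ 1 := by
                  rw [abs_mul]
                  exact mul_le_one₀ (aux_abs_sign_le_one _) (abs_nonneg _) (hgy h)
          _ = ((T.erase x).card : ℝ) := by rw [Finset.sum_const, nsmul_eq_mul, mul_one]
          _ = (T.card : ℝ) - 1 := h1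
      show φ g ≤ c
      rw [hφ, hsplit, hcdef]
      have hsum : Real.sign (f x) * g x + ∑ h ∈ T.erase x, Real.sign (f h) * g h
          ≤ (ε - 1) + ((T.card : ℝ) - 1) := add_le_add hsx hRle
      calc (T.card : ℝ)⁻¹ * (Real.sign (f x) * g x + ∑ h ∈ T.erase x, Real.sign (f h) * g h)
          ≤ (T.card : ℝ)⁻¹ * ((ε - 1) + ((T.card : ℝ) - 1)) :=
            mul_le_mul_of_nonneg_left hsum (by positivity)
        _ = 1 - (2 - ε) / (T.card : ℝ) := by field_simp; ring
    -- conclude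
    have hmemf := hΔ ε hεpos
    have hsub : closure (convexHull ℝ {g : C(K, ℝ) | ‖g‖ ≤ 1 ∧ 2 - ε ≤ ‖f - g‖})
        ⊆ {g : C(K, ℝ) | φ g ≤ c} := by
      refine closure_minimal (convexHull_min hincl ?_) ?_
      · exact convex_halfSpace_le ⟨φ.map_add, φ.map_smul⟩ c
      · exact isClosed_Iic.preimage φ.continuous
    have : φ f ≤ c := hsub hmemf
    rw [hφf] at this
    linarith
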